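/- There is a strictly increasing (under strict ideal inclusion) chain of ideals over the alphabet Σ_ℓ = {a₀, …, a_ℓ}, given by reduced ideal representations of length at most 2ℓ+1, whose length is at least 2^ℓ. Consequently, any weight function on reduced ideal representations of length ≤ 2ℓ+1 over Σ_ℓ that is strictly monotone with respect to strict ideal inclusion must attain at least 2^ℓ distinct values. -/

import Mathlib

def IsDirectedLang {A : Type*} (L : Set (List A)) : Prop :=
  ∀ u ∈ L, ∀ v ∈ L, ∃ w ∈ L, u.Sublist w ∧ v.Sublist w

def dcl {A : Type*} (L : Set (List A)) : Set (List A) := {u | ∃ v ∈ L, u.Sublist v}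

def DownwardClosed {A : Type*} (D : Set (List A)) : Prop :=
  ∀ u v : List A, u.Sublist v → v ∈ D → u ∈ D

def IsIdeal {A : Type*} (I : Set (List A)) : Prop :=
  I.Nonempty ∧ DownwardClosed I ∧ IsDirectedLang I

inductive Atom (A : Type*) where
  | single : A → Atom A
  | alph : Finset A → Atom A

def Atom.lang {A : Type*} : Atom A → Set (List A)
  | .single a => {[], [a]}
  | .alph d => {w | ∀ c ∈ w, c ∈ d}

def Atom.Valid {A : Type*} : Atom A → Prop
  | .single _ => True
  | .alph d => d.Nonempty

def conc {A : Type*} (L M : Set (List A)) : Set (List A) :=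
  {w | ∃ u ∈ L, ∃ v ∈ M, w = u ++ v}

def Idl {A : Type*} : List (Atom A) → Set (List A)
  | [] => {[]}
  | α :: r => conc α.lang (Idl r)

def LeftAbsorbs {A : Type*} (α β : Atom A) : Prop := Idl [α, β] = Idl [α]
def RightAbsorbs {A : Type*} (α β : Atom A) : Prop := Idl [α, β] = Idl [β]
def Absorptive {A : Type*} (α β : Atom A) : Prop := LeftAbsorbs α β ∨ RightAbsorbs α β
def Reduced {A : Type*} (r : List (Atom A)) : Prop := r.Chain' fun α β => ¬ Absorptive α β

def atomWeight {A : Type*} (k : ℕ) : Atom A → ℕ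
  | .single _ => 1
  | .alph d => (k+1) ^ d.card

def repWeight {A : Type*} (k : ℕ) (r : List (Atom A)) : ℕ := (r.map (atomWeight k)).sum

/-! ### Auxiliary development -/

open Fin.NatCast

namespace ExpChain

/-- The chain representation: `rep ℓ i n` encodes `n < 2^i` over `Fin (ℓ+1)`. -/
def rep (ℓ : ℕ) : ℕ → ℕ → List (Atom (Fin (ℓ+1)))
  | 0, _ => [.single 0]
  | i+1, n =>
    if n < 2^i then rep ℓ i n
    else .alph (Finset.Iio ((i+1 : ℕ) : Fin (ℓ+1))) ::
         .single ((i+1 : ℕ) : Fin (ℓ+1)) :: rep ℓ i (n - 2^i)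

section Generic
variable {A : Type*}

lemma nil_mem_lang (α : Atom A) : [] ∈ α.lang := by
  cases α with
  | single a => left; rfl
  | alph d => intro c hc; cases hc

lemma nil_mem_Idl (r : List (Atom A)) : [] ∈ Idl r := by
  induction r with
  | nil => rfl
  | cons α r ih => exact ⟨[], nil_mem_lang α, [], ih, rfl⟩

lemma mem_Idl_cons {α : Atom A} {r : List (Atom A)} {w : List A} :
    w ∈ Idl (α :: r) ↔ ∃ u ∈ α.lang, ∃ v ∈ Idl r, w = u ++ v := Iff.rfl

lemma conc_mono_right {L M M' : Set (List A)} (h : M ⊆ M') : conc L M ⊆ conc L M' := by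
  rintro w ⟨u, hu, v, hv, rfl⟩; exact ⟨u, hu, v, h hv, rfl⟩

lemma mem_Idl_singleton {α : Atom A} {w : List A} : w ∈ Idl [α] ↔ w ∈ α.lang := by
  constructor
  · rintro ⟨u, hu, v, hv, rfl⟩
    cases hv; simpa using hu
  · intro h; exact ⟨w, h, [], rfl, (List.append_nil w).symm⟩

/-- Letters occurring in an atom satisfy a predicate. -/
def AtomIn (P : A → Prop) : Atom A → Prop
  | .single a => P a
  | .alph d => ∀ c ∈ d, P c

lemma AtomIn.mono {P Q : A → Prop} (h : ∀ a, P a → Q a) {α : Atom A} (hα : AtomIn P α) :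
    AtomIn Q α := by
  cases α with
  | single a => exact h _ hα
  | alph d => exact fun c hc => h _ (hα c hc)

lemma lang_letters {P : A → Prop} {α : Atom A} (h : AtomIn P α) :
    ∀ w ∈ α.lang, ∀ c ∈ w, P c := by
  cases α with
  | single a =>
    rintro w (rfl | rfl) c hc
    · cases hc
    · simp only [List.mem_singleton] at hc; subst hc; exact h
  | alph d => exact fun w hw c hc => h c (hw c hc)

lemma Idl_letters {P : A → Prop} {r : List (Atom A)} (h : ∀ α ∈ r, AtomIn P α) :
    ∀ w ∈ Idl r, ∀ c ∈ w, P c := by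
  induction r with
  | nil => rintro w rfl c hc; cases hc
  | cons α r ih =>
    rintro w ⟨u, hu, v, hv, rfl⟩ c hc
    rcases List.mem_append.1 hc with hc | hc
    · exact lang_letters (h α (by simp)) u hu c hc
    · exact ih (fun β hβ => h β (by simp [hβ])) v hv c hc

/-- unique-occurrence splitting lemma -/
lemma append_cons_inj {a : A} : ∀ {u P t w' : List A}, a ∉ u → a ∉ P →
    u ++ a :: t = P ++ a :: w' → u = P ∧ t = w' := by
  intro u
  induction u with
  | nil =>
    intro P t w' _ hP h
    cases P with
    | nil => simpa using h
    | cons b P =>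
      simp only [List.nil_append, List.cons_append, List.cons.injEq] at h
      exact absurd (h.1 ▸ List.mem_cons_self (a := a) (l := P) : a ∈ b :: P) hP
  | cons b u ih =>
    intro P t w' hu hP h
    cases P with
    | nil =>
      simp only [List.cons_append, List.nil_append, List.cons.injEq] at h
      exact absurd (h.1 ▸ List.mem_cons_self (a := a) (l := u) : a ∈ b :: u) hu
    | cons b' P =>
      simp only [List.cons_append, List.cons.injEq] at h
      obtain ⟨rfl, h⟩ := h
      obtain ⟨h1, h2⟩ := ih (fun hx => hu (List.mem_cons_of_mem _ hx))
        (fun hx => hP (List.mem_cons_of_mem _ hx)) h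
      exact ⟨by rw [h1], h2⟩

end Generic

/-- Canonical witness word of a representation. -/
def atomWord {n : ℕ} : Atom (Fin n) → List (Fin n)
  | .single a => [a]
  | .alph d => d.sort (· ≤ ·)

def wordOf {n : ℕ} (r : List (Atom (Fin n))) : List (Fin n) := (r.map atomWord).flatten

@[simp] lemma wordOf_nil {n : ℕ} : wordOf ([] : List (Atom (Fin n))) = [] := rfl

@[simp] lemma wordOf_cons {n : ℕ} (α : Atom (Fin n)) (r : List (Atom (Fin n))) :
    wordOf (α :: r) = atomWord α ++ wordOf r := rfl

lemma atomWord_mem_lang {n : ℕ} (α : Atom (Fin n)) : atomWord α ∈ α.lang := by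
  cases α with
  | single a => right; rfl
  | alph d => intro c hc; exact (Finset.mem_sort _).1 hc

lemma wordOf_mem_Idl {n : ℕ} (r : List (Atom (Fin n))) : wordOf r ∈ Idl r := by
  induction r with
  | nil => rfl
  | cons α r ih => exact ⟨atomWord α, atomWord_mem_lang α, wordOf r, ih, rfl⟩

variable {ℓ : ℕ}

lemma rep_lo {i n : ℕ} (h : n < 2^i) : rep ℓ (i+1) n = rep ℓ i n := by
  rw [rep, if_pos h]

lemma rep_hi {i n : ℕ} (h : ¬ n < 2^i) :
    rep ℓ (i+1) n = .alph (Finset.Iio ((i+1 : ℕ) : Fin (ℓ+1))) ::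
      .single ((i+1 : ℕ) : Fin (ℓ+1)) :: rep ℓ i (n - 2^i) := by
  rw [rep, if_neg h]

lemma rep_letters : ∀ i n, i ≤ ℓ → ∀ α ∈ rep ℓ i n, AtomIn (fun c : Fin (ℓ+1) => c.val ≤ i) α := by
  intro i
  induction i with
  | zero =>
    intro n _ α hα
    simp only [rep, List.mem_singleton] at hα
    subst hα
    show ((0 : Fin (ℓ+1)) : ℕ) ≤ 0
    simp
  | succ i ih =>
    intro n hi α hα
    by_cases h1 : n < 2^i
    · rw [rep_lo h1] at hα
      exact (ih n (by omega) α hα).mono (fun a ha => by omega)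
    · rw [rep_hi h1] at hα
      have hv : (((i+1 : ℕ) : Fin (ℓ+1)) : ℕ) = i + 1 := Fin.val_cast_of_lt (by omega)
      simp only [List.mem_cons] at hα
      rcases hα with rfl | rfl | hα
      · intro c hc
        have h2 : c < ((i+1 : ℕ) : Fin (ℓ+1)) := Finset.mem_Iio.1 hc
        have : c.val < i + 1 := by rw [← hv]; exact h2
        omega
      · show (((i+1:ℕ) : Fin (ℓ+1)) : ℕ) ≤ i + 1
        omega
      · exact (ih _ (by omega) α hα).mono (fun a ha => by omega)

lemma Idl_rep_letters {i n : ℕ} (hi : i ≤ ℓ) :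
    ∀ w ∈ Idl (rep ℓ i n), ∀ c ∈ w, c.val ≤ i :=
  Idl_letters (rep_letters i n hi)

/-- Monotonicity of the chain. -/
lemma Idl_rep_mono : ∀ i, i ≤ ℓ → ∀ m n, m ≤ n → n < 2^i →
    Idl (rep ℓ i m) ⊆ Idl (rep ℓ i n) := by
  intro i
  induction i with
  | zero =>
    intro _ m n hmn hn
    interval_cases n
    interval_cases m
    exact subset_rfl
  | succ i ih =>
    intro hi m n hmn hn
    by_cases h1 : n < 2^i
    · rw [rep_lo h1, rep_lo (show m < 2^i by omega)]
      exact ih (by omega) m n hmn h1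
    · rw [rep_hi h1]
      by_cases h2 : m < 2^i
      · rw [rep_lo h2]
        intro w hw
        refine ⟨w, ?_, [], ⟨[], Or.inl rfl, [], nil_mem_Idl _, rfl⟩, by simp⟩
        intro c hc
        have hcle := Idl_rep_letters (by omega) w hw c hc
        rw [Finset.mem_Iio]
        have hv : (((i+1 : ℕ) : Fin (ℓ+1)) : ℕ) = i + 1 := Fin.val_cast_of_lt (by omega)
        show c.val < ((((i+1 : ℕ)) : Fin (ℓ+1)) : ℕ)
        omega
      · rw [rep_hi h2]
        refine conc_mono_right (conc_mono_right ?_)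
        have hpow : 2^(i+1) = 2^i + 2^i := by ring
        exact ih (by omega) _ _ (by omega) (by omega)

/-- Strictness: the canonical word of `rep ℓ i n` belongs to `Idl (rep ℓ i m)` only if `n ≤ m`. -/
lemma wordOf_le : ∀ i, i ≤ ℓ → ∀ m n, n < 2^i → m < 2^i →
    wordOf (rep ℓ i n) ∈ Idl (rep ℓ i m) → n ≤ m := by
  intro i
  induction i with
  | zero => intro _ m n hn _ _; omega
  | succ i ih =>
    intro hi m n hn hm hmem
    have hv : ((((i+1 : ℕ)) : Fin (ℓ+1)) : ℕ) = i + 1 := Fin.val_cast_of_lt (by omega)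
    set c : Fin (ℓ+1) := ((i+1 : ℕ) : Fin (ℓ+1)) with hc
    by_cases h1 : n < 2^i
    · by_cases h2 : m < 2^i
      · rw [rep_lo h1, rep_lo h2] at hmem
        exact ih (by omega) m n h1 h2 hmem
      · omega
    · have hcn : c ∈ wordOf (rep ℓ (i+1) n) := by
        rw [rep_hi h1, wordOf_cons, wordOf_cons]
        simp only [List.mem_append]
        right; left
        show c ∈ atomWord (Atom.single c)
        simp [atomWord]
      by_cases h2 : m < 2^i
      · rw [rep_lo h2] at hmem
        exfalso
        have := Idl_rep_letters (ℓ := ℓ) (i := i) (n := m) (by omega) _ hmem c hcn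
        omega
      · rw [rep_hi h1] at hmem hcn
        rw [rep_hi h2] at hmem
        obtain ⟨u, hu, v', ⟨v, hv', t, ht, rfl⟩, heq⟩ := hmem
        have hP : c ∉ Finset.sort (Finset.Iio c) (· ≤ ·) := by
          intro h
          exact absurd (Finset.mem_Iio.1 ((Finset.mem_sort _).1 h)) (lt_irrefl c)
        have hw' : c ∉ wordOf (rep ℓ i (n - 2^i)) := by
          intro h
          have := Idl_rep_letters (ℓ := ℓ) (i := i) (n := n - 2^i) (by omega)
            _ (wordOf_mem_Idl _) c h
          omega
        have hu' : c ∉ u := by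
          intro h
          have hlt : c < c := Finset.mem_Iio.1 (hu c h)
          exact absurd hlt (lt_irrefl c)
        have ht' : c ∉ t := by
          intro h
          have := Idl_rep_letters (ℓ := ℓ) (i := i) (n := m - 2^i) (by omega) t ht c h
          omega
        have heq' : Finset.sort (Finset.Iio c) (· ≤ ·) ++ (c :: wordOf (rep ℓ i (n - 2^i)))
            = u ++ (v ++ t) := heq
        have hv2 : v = [] ∨ v = [c] := hv'
        rcases hv2 with rfl | rfl
        · exfalso
          have hmemc : c ∈ u ++ ([] ++ t) :=
            heq' ▸ List.mem_append_right _ (List.mem_cons_self (a := c))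
          rcases List.mem_append.1 hmemc with h | h
          · exact hu' h
          · exact ht' (by simpa using h)
        · have heq'' : u ++ c :: t = Finset.sort (Finset.Iio c) (· ≤ ·) ++
              c :: wordOf (rep ℓ i (n - 2^i)) := by
            rw [heq']; simp
          obtain ⟨_, h2'⟩ := append_cons_inj hu' hP heq''
          have := ih (by omega) (m - 2^i) (n - 2^i) (by omega) (by omega) (h2' ▸ ht)
          omega

/-! ### Non-absorptiveness facts -/

section NonAbs
variable {c d : Fin (ℓ+1)}

lemma zero_mem_Iio (h : 0 < d) : ([0] : List (Fin (ℓ+1))) ∈ (Atom.alph (Finset.Iio d)).lang := by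
  intro x hx
  simp only [List.mem_singleton] at hx
  subst hx
  exact Finset.mem_Iio.2 h

lemma not_abs_alph_single (hc : 0 < c) :
    ¬ Absorptive (Atom.alph (Finset.Iio c)) (Atom.single c) := by
  rintro (h | h)
  · have hmem : [c] ∈ Idl [Atom.alph (Finset.Iio c), Atom.single c] :=
      ⟨[], fun x hx => absurd hx List.not_mem_nil, [c],
        mem_Idl_singleton.2 (Or.inr rfl), rfl⟩
    rw [h] at hmem
    have := mem_Idl_singleton.1 hmem c (List.mem_singleton_self c)
    exact absurd (Finset.mem_Iio.1 this) (lt_irrefl c)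
  · have hmem : [0] ∈ Idl [Atom.alph (Finset.Iio c), Atom.single c] :=
      ⟨[0], zero_mem_Iio hc, [], nil_mem_Idl _, by simp⟩
    rw [h] at hmem
    rcases (mem_Idl_singleton.1 hmem : _ ∈ ({[], [c]} : Set _)) with h' | h'
    · exact absurd h' (by simp)
    · have : (0 : Fin (ℓ+1)) = c := by simpa using h'
      exact absurd (this ▸ hc) (lt_irrefl _)

lemma not_abs_single_alph (hd : 0 < d) (hcd : ¬ c < d) (hc : c ≠ 0) :
    ¬ Absorptive (Atom.single c) (Atom.alph (Finset.Iio d)) := by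
  rintro (h | h)
  · have hmem : [0] ∈ Idl [Atom.single c, Atom.alph (Finset.Iio d)] :=
      ⟨[], Or.inl rfl, [0], mem_Idl_singleton.2 (zero_mem_Iio hd), rfl⟩
    rw [h] at hmem
    rcases (mem_Idl_singleton.1 hmem : _ ∈ ({[], [c]} : Set _)) with h' | h'
    · exact absurd h' (by simp)
    · exact hc (by simpa using h'.symm)
  · have hmem : [c] ∈ Idl [Atom.single c, Atom.alph (Finset.Iio d)] :=
      ⟨[c], Or.inr rfl, [], nil_mem_Idl _, by simp⟩
    rw [h] at hmem
    exact hcd (Finset.mem_Iio.1 (mem_Idl_singleton.1 hmem c (List.mem_singleton_self c)))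

lemma not_abs_single_single (hc : c ≠ 0) :
    ¬ Absorptive (Atom.single c) (Atom.single (0 : Fin (ℓ+1))) := by
  rintro (h | h)
  · have hmem : [(0 : Fin (ℓ+1))] ∈ Idl [Atom.single c, Atom.single (0 : Fin (ℓ+1))] :=
      ⟨[], Or.inl rfl, [0], mem_Idl_singleton.2 (Or.inr rfl), rfl⟩
    rw [h] at hmem
    rcases (mem_Idl_singleton.1 hmem : _ ∈ ({[], [c]} : Set _)) with h' | h'
    · exact absurd h' (by simp)
    · exact hc (by simpa using h'.symm)
  · have hmem : [c] ∈ Idl [Atom.single c, Atom.single (0 : Fin (ℓ+1))] :=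
      ⟨[c], Or.inr rfl, [], nil_mem_Idl _, by simp⟩
    rw [h] at hmem
    rcases (mem_Idl_singleton.1 hmem : _ ∈ ({[], [(0 : Fin (ℓ+1))]} : Set _)) with h' | h'
    · exact absurd h' (by simp)
    · exact hc (by simpa using h')

end NonAbs

lemma rep_head : ∀ i n, ∃ tl, rep ℓ i n = .single 0 :: tl ∨
    ∃ j, 1 ≤ j ∧ j ≤ i ∧ rep ℓ i n = .alph (Finset.Iio ((j : ℕ) : Fin (ℓ+1))) :: tl := by
  intro i
  induction i with
  | zero => intro n; exact ⟨[], Or.inl rfl⟩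
  | succ i ih =>
    intro n
    by_cases h1 : n < 2^i
    · obtain ⟨tl, h | ⟨j, hj1, hj2, h⟩⟩ := ih n
      · exact ⟨tl, Or.inl (by rw [rep_lo h1, h])⟩
      · exact ⟨tl, Or.inr ⟨j, hj1, by omega, by rw [rep_lo h1, h]⟩⟩
    · exact ⟨.single ((i+1 : ℕ) : Fin (ℓ+1)) :: rep ℓ i (n - 2^i),
        Or.inr ⟨i+1, by omega, le_refl _, rep_hi h1⟩⟩

lemma rep_reduced : ∀ i n, i ≤ ℓ → Reduced (rep ℓ i n) := by
  intro i
  induction i with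
  | zero => intro n _; simp [rep, Reduced]; exact List.isChain_singleton _
  | succ i ih =>
    intro n hi
    by_cases h1 : n < 2^i
    · rw [rep_lo h1]; exact ih n (by omega)
    · rw [rep_hi h1]
      have hv : ((((i+1 : ℕ)) : Fin (ℓ+1)) : ℕ) = i + 1 := Fin.val_cast_of_lt (by omega)
      set c : Fin (ℓ+1) := ((i+1 : ℕ) : Fin (ℓ+1)) with hcdef
      have hc0 : (0 : Fin (ℓ+1)) < c := by
        show (0 : Fin (ℓ+1)).val < c.val
        simp only [Fin.val_zero, hv]
        omega
      obtain ⟨tl, hhd | ⟨j, hj1, hj2, hhd⟩⟩ := rep_head (ℓ := ℓ) i (n - 2^i)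
      · rw [hhd]
        refine List.IsChain.cons_cons (not_abs_alph_single hc0) (List.IsChain.cons_cons ?_ ?_)
        · exact not_abs_single_single (by exact Fin.ne_of_gt hc0)
        · have := ih (n - 2^i) (by omega)
          rw [hhd] at this
          exact this
      · rw [hhd]
        have hjv : ((((j : ℕ)) : Fin (ℓ+1)) : ℕ) = j := Fin.val_cast_of_lt (by omega)
        refine List.IsChain.cons_cons (not_abs_alph_single hc0) (List.IsChain.cons_cons ?_ ?_)
        · refine not_abs_single_alph ?_ ?_ (Fin.ne_of_gt hc0)
          · show (0 : Fin (ℓ+1)).val < _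
            simp only [Fin.val_zero, hjv]
            omega
          · show ¬ (c.val < _)
            rw [hv, hjv]
            omega
        · have := ih (n - 2^i) (by omega)
          rw [hhd] at this
          exact this

lemma rep_valid : ∀ i n, i ≤ ℓ → ∀ α ∈ rep ℓ i n, α.Valid := by
  intro i
  induction i with
  | zero =>
    intro n _ α hα
    simp only [rep, List.mem_singleton] at hα
    subst hα; trivial
  | succ i ih =>
    intro n hi α hα
    by_cases h1 : n < 2^i
    · rw [rep_lo h1] at hα; exact ih n (by omega) α hα
    · rw [rep_hi h1] at hα
      have hv : ((((i+1 : ℕ)) : Fin (ℓ+1)) : ℕ) = i + 1 := Fin.val_cast_of_lt (by omega)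
      simp only [List.mem_cons] at hα
      rcases hα with rfl | rfl | hα
      · refine ⟨0, Finset.mem_Iio.2 ?_⟩
        show (0 : Fin (ℓ+1)).val < _
        simp only [Fin.val_zero, hv]
        omega
      · trivial
      · exact ih _ (by omega) α hα

lemma rep_length : ∀ i n, (rep ℓ i n).length ≤ 2*i + 1 := by
  intro i
  induction i with
  | zero => intro n; simp [rep]
  | succ i ih =>
    intro n
    by_cases h1 : n < 2^i
    · rw [rep_lo h1]; have := ih n; omega
    · rw [rep_hi h1]; have := ih (n - 2^i); simp only [List.length_cons]; omega

lemma Idl_rep_ssubset {m n : ℕ} (hmn : m < n) (hn : n < 2^ℓ) :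
    Idl (rep ℓ ℓ m) ⊂ Idl (rep ℓ ℓ n) := by
  rw [Set.ssubset_def]
  constructor
  · exact Idl_rep_mono ℓ (le_refl ℓ) m n (by omega) hn
  · intro h
    have := wordOf_le ℓ (le_refl ℓ) m n hn (by omega) (h (wordOf_mem_Idl _))
    omega

end ExpChain

theorem exponential_chain (ℓ : ℕ) :
    ∃ C : Fin (2 ^ ℓ) → List (Atom (Fin (ℓ + 1))),
      (∀ i, (∀ α ∈ C i, α.Valid) ∧ Reduced (C i) ∧ (C i).length ≤ 2 * ℓ + 1) ∧
      (∀ i j, i < j → Idl (C i) ⊂ Idl (C j)) ∧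
      (∀ μ : List (Atom (Fin (ℓ + 1))) → ℕ,
        (∀ r s : List (Atom (Fin (ℓ + 1))),
          (∀ α ∈ r, α.Valid) → (∀ α ∈ s, α.Valid) →
          Reduced r → Reduced s →
          r.length ≤ 2 * ℓ + 1 → s.length ≤ 2 * ℓ + 1 →
          Idl r ⊂ Idl s → μ r < μ s) →
        2 ^ ℓ ≤ (Set.range fun i : Fin (2 ^ ℓ) => μ (C i)).ncard) := by
  refine ⟨fun i => ExpChain.rep ℓ ℓ i.val, fun i => ⟨ExpChain.rep_valid ℓ i.val (le_refl ℓ),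
    ExpChain.rep_reduced ℓ i.val (le_refl ℓ), ExpChain.rep_length ℓ i.val⟩, ?_, ?_⟩
  · intro i j hij
    exact ExpChain.Idl_rep_ssubset hij j.isLt
  · intro μ hμ
    have hsm : StrictMono (fun i : Fin (2^ℓ) => μ (ExpChain.rep ℓ ℓ i.val)) := by
      intro i j hij
      exact hμ _ _ (ExpChain.rep_valid ℓ i.val (le_refl ℓ))
        (ExpChain.rep_valid ℓ j.val (le_refl ℓ))
        (ExpChain.rep_reduced ℓ i.val (le_refl ℓ)) (ExpChain.rep_reduced ℓ j.val (le_refl ℓ))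
        (ExpChain.rep_length ℓ i.val) (ExpChain.rep_length ℓ j.val)
        (ExpChain.Idl_rep_ssubset hij j.isLt)
    rw [← Set.image_univ, Set.ncard_image_of_injective _ hsm.injective, Set.ncard_univ,
      Nat.card_eq_fintype_card, Fintype.card_fin]
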